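/- Let p be a prime and d ≥ 1. (a) If ν is a partition of pd with at most n parts and c_1(ν) = 0, then every part of ν is divisible by p. (b) For any partition μ of d with at most n parts, the partition pμ := (pμ_1, …, pμ_n) of pd satisfies c_1(pμ) = 0 and c_{i+1}(pμ) = c_i(μ) for all i ≥ 1. -/

import Mathlib

/-- `l` is a partition of `d` with at most `n` parts: a weakly decreasing tuple
(indexed from 0, vanishing from index `n` on) of nonnegative integers summing to `d`. -/
def IsPartition (n d : ℕ) (l : ℕ → ℕ) : Prop :=
  Antitone l ∧ (∀ i, n ≤ i → l i = 0) ∧ ∑ i ∈ Finset.range n, l i = d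

/-- `carry p n β i` is `c_{i+1}(β)`, the amount carried past the `p^(i+1)`-column when
`β 0, …, β (n-1)` are added in base `p`. -/
def carry (p n : ℕ) (β : ℕ → ℕ) (i : ℕ) : ℕ :=
  (∑ j ∈ Finset.range n, β j % p ^ (i + 1)) / p ^ (i + 1)

theorem carry_pattern_of_p_mul (p n d : ℕ) (hp : p.Prime) (hd : 1 ≤ d) :
    (∀ nu : ℕ → ℕ, IsPartition n (p * d) nu → carry p n nu 0 = 0 → ∀ j, p ∣ nu j) ∧
      (∀ mu : ℕ → ℕ, IsPartition n d mu →
        carry p n (fun j => p * mu j) 0 = 0 ∧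
          ∀ i, carry p n (fun j => p * mu j) (i + 1) = carry p n mu i) := by
  have hppos : 0 < p := hp.pos
  constructor
  · intro nu hnu hc j
    obtain ⟨-, hzero, hsum⟩ := hnu
    have hS : (∑ j ∈ Finset.range n, nu j % p ^ (0 + 1)) / p ^ (0 + 1) = 0 := hc
    rw [pow_one] at hS
    have hlt : ∑ j ∈ Finset.range n, nu j % p < p := by
      exact ((Nat.div_eq_zero_iff).mp hS).resolve_left hppos.ne'
    have hmod : (∑ j ∈ Finset.range n, nu j % p) % p = 0 := by
      rw [← Finset.sum_nat_mod, hsum, Nat.mul_mod_right]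
    have hS0 : ∑ j ∈ Finset.range n, nu j % p = 0 :=
      Nat.eq_zero_of_dvd_of_lt (Nat.dvd_of_mod_eq_zero hmod) hlt
    by_cases hj : j < n
    · have := Finset.sum_eq_zero_iff.mp hS0 j (Finset.mem_range.mpr hj)
      exact Nat.dvd_of_mod_eq_zero this
    · rw [hzero j (le_of_not_gt hj)]
      exact dvd_zero p
  · intro mu hmu
    constructor
    · show (∑ j ∈ Finset.range n, (p * mu j) % p ^ (0 + 1)) / p ^ (0 + 1) = 0
      simp [Nat.mul_mod_right]
    · intro i
      show (∑ j ∈ Finset.range n, (p * mu j) % p ^ (i + 1 + 1)) / p ^ (i + 1 + 1) =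
        (∑ j ∈ Finset.range n, mu j % p ^ (i + 1)) / p ^ (i + 1)
      have hpow : ∀ j : ℕ, (p * mu j) % p ^ (i + 1 + 1) = p * (mu j % p ^ (i + 1)) := by
        intro j
        rw [pow_succ', Nat.mul_mod_mul_left]
      rw [Finset.sum_congr rfl fun j _ => hpow j, ← Finset.mul_sum,
        show p ^ (i + 1 + 1) = p * p ^ (i + 1) from pow_succ' p (i + 1),
        Nat.mul_div_mul_left _ _ hppos]
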